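/- If A and D are positive semi-definite n×n real matrices and D ≥ Id (i.e., D − Id is positive semi-definite), then det(Id + D A D) ≥ det(Id + A). -/

import Mathlib

open Matrix
open scoped MatrixOrder

lemma aux_det_nonneg {n : ℕ} {Q : Matrix (Fin n) (Fin n) ℝ} (hQ : Q.PosSemidef) :
    0 ≤ Q.det := by
  rw [hQ.isHermitian.det_eq_prod_eigenvalues]
  exact Finset.prod_nonneg fun i _ => hQ.eigenvalues_nonneg i

lemma aux_one_le_det_one_add {n : ℕ} {Q : Matrix (Fin n) (Fin n) ℝ} (hQ : Q.PosSemidef) :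
    1 ≤ (1 + Q).det := by
  have h := hQ.isHermitian
  have hU : (h.eigenvectorUnitary : Matrix (Fin n) (Fin n) ℝ) *
      star (h.eigenvectorUnitary : Matrix (Fin n) (Fin n) ℝ) = 1 :=
    Matrix.mem_unitaryGroup_iff.mp h.eigenvectorUnitary.2
  have key : (1 + Q) = (h.eigenvectorUnitary : Matrix (Fin n) (Fin n) ℝ) *
      (1 + diagonal (RCLike.ofReal ∘ h.eigenvalues)) *
      star (h.eigenvectorUnitary : Matrix (Fin n) (Fin n) ℝ) := by
    rw [mul_add, add_mul, mul_one, hU]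
    exact congrArg (1 + ·) h.spectral_theorem
  rw [key, det_mul_right_comm, hU, one_mul]
  have : (1 : Matrix (Fin n) (Fin n) ℝ) + diagonal (RCLike.ofReal ∘ h.eigenvalues) =
      diagonal (fun i => 1 + h.eigenvalues i) := by
    rw [← diagonal_one, diagonal_add]
    rfl
  rw [this, det_diagonal]
  have hev : ∀ i, 0 ≤ h.eigenvalues i := hQ.eigenvalues_nonneg
  have hle : ∏ _i : Fin n, (1 : ℝ) ≤ ∏ i, (1 + h.eigenvalues i) :=
    Finset.prod_le_prod (fun i _ => zero_le_one) (fun i _ => by linarith [hev i])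
  simpa using hle

lemma aux_det_le_det_add {n : ℕ} {M P : Matrix (Fin n) (Fin n) ℝ}
    (hM : M.PosDef) (hP : P.PosSemidef) : M.det ≤ (M + P).det := by
  set S := CFC.sqrt M with hSdef
  have hS : S.PosSemidef := (CFC.sqrt_nonneg M).posSemidef
  have hSS : S * S = M := CFC.sqrt_mul_sqrt_self M hM.posSemidef.nonneg
  have hdet : 0 < S.det * S.det := by
    rw [← det_mul, hSS]; exact hM.det_pos
  have hSunit : IsUnit S.det := by
    refine isUnit_iff_ne_zero.mpr fun h0 => ?_
    rw [h0, mul_zero] at hdet; exact lt_irrefl _ hdet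
  have hSinv : S * S⁻¹ = 1 := mul_nonsing_inv S hSunit
  have hSinv' : S⁻¹ * S = 1 := nonsing_inv_mul S hSunit
  have hQ : (S⁻¹ * P * S⁻¹).PosSemidef := by
    have := hP.mul_mul_conjTranspose_same S⁻¹
    rwa [hS.inv.isHermitian.eq] at this
  have hcong : S * (S⁻¹ * P * S⁻¹) * S = P := by
    calc S * (S⁻¹ * P * S⁻¹) * S = (S * S⁻¹) * P * (S⁻¹ * S) := by
          simp only [Matrix.mul_assoc]
      _ = P := by rw [hSinv, hSinv', one_mul, mul_one]
  have key : M + P = S * (1 + S⁻¹ * P * S⁻¹) * S := by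
    rw [mul_add, add_mul, mul_one, hSS, hcong]
  rw [key, det_mul, det_mul, ← hSS, det_mul]
  have h1 := aux_one_le_det_one_add hQ
  nlinarith [aux_det_nonneg hS]

/-- If `A, D` are positive semi-definite and `D ≥ Id`, then
`det (Id + D * A * D) ≥ det (Id + A)`. -/
theorem det_one_add_conj_ge {n : ℕ} (A D : Matrix (Fin n) (Fin n) ℝ)
    (hA : A.PosSemidef) (hD : D.PosSemidef) (hD1 : (D - 1).PosSemidef) :
    (1 + A).det ≤ (1 + D * A * D).det := by
  set B := CFC.sqrt A with hBdef
  have hB : B.PosSemidef := (CFC.sqrt_nonneg A).posSemidef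
  have hBB : B * B = A := CFC.sqrt_mul_sqrt_self A hA.nonneg
  -- D*D - 1 is PSD
  have hDD1 : (D * D - 1).PosSemidef := by
    have h1 : ((D - 1) * (D - 1)).PosSemidef := by
      have := (posSemidef_conjTranspose_mul_self (D - 1))
      rwa [hD1.isHermitian.eq] at this
    have h2 : ((D - 1) + (D - 1)).PosSemidef := hD1.add hD1
    have heq : D * D - 1 = (D - 1) * (D - 1) + ((D - 1) + (D - 1)) := by
      noncomm_ring
    rw [heq]
    exact h1.add h2
  -- P := B * (D*D - 1) * B is PSD
  have hP : (B * (D * D - 1) * B).PosSemidef := by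
    have := hDD1.mul_mul_conjTranspose_same B
    rwa [hB.isHermitian.eq] at this
  have hM : (1 + A).PosDef := Matrix.PosDef.one.add_posSemidef hA
  have step1 : (1 + A).det ≤ (1 + A + B * (D * D - 1) * B).det :=
    aux_det_le_det_add hM hP
  have key : 1 + A + B * (D * D - 1) * B = 1 + (B * D) * (D * B) := by
    rw [← hBB]
    noncomm_ring
  rw [key] at step1
  have sylvester : (1 + (B * D) * (D * B)).det = (1 + (D * B) * (B * D)).det := by
    rw [det_one_add_mul_comm]
  have final : (D * B) * (B * D) = D * A * D := by
    rw [← hBB]; noncomm_ring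
  rw [sylvester, final] at step1
  exact step1
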